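/- Let Y ⊆ ℝ^{d'} be a nonempty closed convex set, μ > 0, and let f : ℝ^d × Y → ℝ be differentiable, (μ/8)-weakly convex in x for every y, and μ_y-strongly concave in y for every x (μ_y > 0). Fix x₀ ∈ ℝ^d, y₀ ∈ Y, and a pair (x₁, y₁) ∈ ℝ^d × Y. Define f₁(x,y) = f(x,y) + (μ/8)‖x − x₀‖² and f₂(x,y) = f(x,y) + (μ/8)‖x − x₁‖², with duality gaps Gap_i(x,y) = max_{y'∈Y} f_i(x, y') − min_{x'∈ℝ^d} f_i(x', y) for i = 1, 2. Then for every α with 0 < α < 1: Gap₁(x₁, y₁) ≥ (3 − 2/α)·Gap₂(x₁, y₁) − (μα/(8(1−α)))·‖x₁ − x₀‖². -/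

import Mathlib

set_option maxHeartbeats 1000000

/-- Auxiliary: if `m ≤ F - (1-t)*K` for all `t ∈ (0,1)` and `K ≥ 0`, then `m ≤ F - K`. -/
lemma stmt8_aux_limit (m F K : ℝ) (hK : 0 ≤ K)
    (h : ∀ t : ℝ, 0 < t → t < 1 → m ≤ F - (1 - t) * K) : m ≤ F - K := by
  rcases eq_or_lt_of_le hK with hK0 | hKpos
  · have := h (1/2) (by norm_num) (by norm_num)
    rw [← hK0] at this ⊢
    linarith
  · by_contra hcon
    push_neg at hcon
    have hhalf := h (1/2) (by norm_num) (by norm_num)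
    set t : ℝ := (m - F + K) / (2 * K) with ht
    have ht0 : 0 < t := by
      apply div_pos (by linarith) (by linarith)
    have ht1 : t < 1 := by
      rw [div_lt_one (by linarith)]
      linarith
    have := h t ht0 ht1
    have htK : t * K = (m - F + K) / 2 := by
      rw [ht]; field_simp
    nlinarith

/-- Lemma 8 (first part) of Yan et al. (2020): with `f₁(x,y) = f(x,y) + (μ/8)‖x − x₀‖²` and
`f₂(x,y) = f(x,y) + (μ/8)‖x − x₁‖²`, for every `0 < α < 1`,
`Gap₁(x₁,y₁) ≥ (3 − 2/α)·Gap₂(x₁,y₁) − (μα/(8(1−α)))‖x₁ − x₀‖²`. -/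
theorem stmt8 {d d' : ℕ}
    (Y : Set (EuclideanSpace ℝ (Fin d')))
    (hYne : Y.Nonempty) (hYcl : IsClosed Y) (hYcv : Convex ℝ Y)
    (f : EuclideanSpace ℝ (Fin d) → EuclideanSpace ℝ (Fin d') → ℝ)
    (μ μy : ℝ) (hμ : 0 < μ) (hμy : 0 < μy)
    (hdiff : Differentiable ℝ fun p : EuclideanSpace ℝ (Fin d) × EuclideanSpace ℝ (Fin d') =>
      f p.1 p.2)
    (hwc : ∀ y ∈ Y, ConvexOn ℝ Set.univ fun x : EuclideanSpace ℝ (Fin d) =>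
      f x y + (μ / 8) / 2 * ‖x‖ ^ 2)
    (hsc : ∀ x, ConcaveOn ℝ Y fun y => f x y + μy / 2 * ‖y‖ ^ 2)
    (x₀ x₁ : EuclideanSpace ℝ (Fin d)) (y₀ y₁ : EuclideanSpace ℝ (Fin d'))
    (hy₀ : y₀ ∈ Y) (hy₁ : y₁ ∈ Y)
    (M₁ m₁ M₂ m₂ : ℝ)
    (hM₁ : IsGreatest ((fun y => f x₁ y + μ / 8 * ‖x₁ - x₀‖ ^ 2) '' Y) M₁)
    (hm₁ : IsLeast (Set.range fun x => f x y₁ + μ / 8 * ‖x - x₀‖ ^ 2) m₁)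
    (hM₂ : IsGreatest ((fun y => f x₁ y + μ / 8 * ‖x₁ - x₁‖ ^ 2) '' Y) M₂)
    (hm₂ : IsLeast (Set.range fun x => f x y₁ + μ / 8 * ‖x - x₁‖ ^ 2) m₂) :
    ∀ α : ℝ, 0 < α → α < 1 →
      M₁ - m₁ ≥ (3 - 2 / α) * (M₂ - m₂) - μ * α / (8 * (1 - α)) * ‖x₁ - x₀‖ ^ 2 := by
  intro α hα0 hα1
  have h1α : 0 < 1 - α := by linarith
  set c : ℝ := μ / 8 with hc
  have hc0 : 0 < c := by rw [hc]; linarith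
  obtain ⟨u, hu⟩ := hm₂.1
  simp only at hu
  -- hu : f u y₁ + c * ‖u - x₁‖ ^ 2 = m₂
  set Q : ℝ := ‖u - x₁‖ ^ 2 with hQdef
  have hQ0 : 0 ≤ Q := sq_nonneg _
  set D : ℝ := ‖x₁ - x₀‖ ^ 2 with hDdef
  have hD0 : 0 ≤ D := sq_nonneg _
  have hu' : f u y₁ = m₂ - c * Q := by linarith
  -- Key: strong convexity at the minimizer `u` of `x ↦ f x y₁ + c‖x-x₁‖²`.
  have key : m₂ ≤ f x₁ y₁ - c / 2 * Q := by
    apply stmt8_aux_limit _ _ _ (by positivity)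
    intro t ht0 ht1
    have ht1' : 0 < 1 - t := by linarith
    set w : EuclideanSpace ℝ (Fin d) := (1 - t) • u + t • x₁ with hw
    have hcv := (hwc y₁ hy₁).2 (Set.mem_univ u) (Set.mem_univ x₁) ht1'.le ht0.le
      (by ring : (1 - t) + t = 1)
    simp only [smul_eq_mul] at hcv
    have hmem := hm₂.2 ⟨w, rfl⟩
    simp only at hmem
    -- hmem : m₂ ≤ f w y₁ + c * ‖w - x₁‖ ^ 2
    have hw1 : w - x₁ = (1 - t) • (u - x₁) := by
      rw [hw]; module
    have hn1 : ‖w - x₁‖ ^ 2 = (1 - t) ^ 2 * Q := by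
      rw [hw1, norm_smul, mul_pow, Real.norm_eq_abs, sq_abs, hQdef]
    have hn2 : ‖w‖ ^ 2 = (1 - t) ^ 2 * ‖u‖ ^ 2
        + 2 * ((1 - t) * t) * (inner ℝ u x₁ : ℝ) + t ^ 2 * ‖x₁‖ ^ 2 := by
      rw [hw, norm_add_sq_real, norm_smul, norm_smul, real_inner_smul_left,
        real_inner_smul_right, Real.norm_eq_abs, Real.norm_eq_abs,
        abs_of_pos ht1', abs_of_pos ht0]
      ring
    have hn3 : Q = ‖u‖ ^ 2 - 2 * (inner ℝ u x₁ : ℝ) + ‖x₁‖ ^ 2 := by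
      rw [hQdef, norm_sub_sq_real]
    have e3 : c / 2 * ((1 - t) * ‖u‖ ^ 2 + t * ‖x₁‖ ^ 2 - ‖w‖ ^ 2)
        = c / 2 * (t * (1 - t) * Q) := by
      rw [hn2, hn3]; ring
    rw [hn1] at hmem
    rw [hu'] at hcv
    have e4 : t * m₂ ≤ t * (f x₁ y₁ - (1 - t) * (c / 2 * Q)) := by nlinarith [hmem, hcv, e3]
    have := le_of_mul_le_mul_left e4 ht0
    linarith
  -- f x₁ y₁ ≤ M₂
  have hFM₂ : f x₁ y₁ ≤ M₂ := by
    have := hM₂.2 ⟨y₁, hy₁, rfl⟩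
    simp only [sub_self, norm_zero] at this
    linarith [this]
  have A3 : c * Q ≤ 2 * (M₂ - m₂) := by linarith
  -- M₂ + c * D ≤ M₁
  obtain ⟨y₂, hy₂Y, hy₂⟩ := hM₂.1
  simp only [sub_self, norm_zero] at hy₂
  have A1 : M₂ + c * D ≤ M₁ := by
    have := hM₁.2 ⟨y₂, hy₂Y, rfl⟩
    simp only at this
    nlinarith [this, hy₂]
  -- m₁ ≤ f u y₁ + c‖u - x₀‖²
  have A2 : m₁ ≤ m₂ - c * Q + c * ‖u - x₀‖ ^ 2 := by
    have := hm₁.2 ⟨u, rfl⟩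
    simp only at this
    rw [hu'] at this
    linarith
  -- Young's inequality (scaled form)
  have young : α * (1 - α) * ‖u - x₀‖ ^ 2 ≤ (1 - α) * Q + α * D := by
    have hd : u - x₀ = (u - x₁) + (x₁ - x₀) := by module
    have hexp : ‖u - x₀‖ ^ 2 = Q + 2 * (inner ℝ (u - x₁) (x₁ - x₀) : ℝ) + D := by
      rw [hd, norm_add_sq_real, hQdef, hDdef]
    have hip : (inner ℝ (u - x₁) (x₁ - x₀) : ℝ) ≤ ‖u - x₁‖ * ‖x₁ - x₀‖ :=
      real_inner_le_norm _ _
    have hip2 : 2 * (α * (1 - α)) * (inner ℝ (u - x₁) (x₁ - x₀) : ℝ)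
        ≤ 2 * (α * (1 - α)) * (‖u - x₁‖ * ‖x₁ - x₀‖) := by
      apply mul_le_mul_of_nonneg_left hip (by positivity)
    have hsq := sq_nonneg ((1 - α) * ‖u - x₁‖ - α * ‖x₁ - x₀‖)
    rw [hexp, hQdef, hDdef]
    nlinarith [hip2, hsq]
  -- Assemble, scaled by α(1-α) > 0
  have hs : 0 < α * (1 - α) := mul_pos hα0 h1α
  have p1 := mul_le_mul_of_nonneg_left A1 hs.le
  have p2 := mul_le_mul_of_nonneg_left A2 hs.le
  have p3 := mul_le_mul_of_nonneg_left A3 (sq_nonneg (1 - α))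
  have p4 := mul_le_mul_of_nonneg_left young hc0.le
  have scaled : α * (1 - α) * ((3 - 2 / α) * (M₂ - m₂) - μ * α / (8 * (1 - α)) * D)
      ≤ α * (1 - α) * (M₁ - m₁) := by
    have lhs_eq : α * (1 - α) * ((3 - 2 / α) * (M₂ - m₂) - μ * α / (8 * (1 - α)) * D)
        = (3 * α * (1 - α) - 2 * (1 - α)) * (M₂ - m₂) - c * α ^ 2 * D := by
      rw [hc]
      field_simp
    rw [lhs_eq]
    nlinarith [p1, p2, p3, p4]
  have := le_of_mul_le_mul_left scaled hs
  linarith
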